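/- Let Ω be convex with diameter D and f L-smooth. For points x_{t−1}, y_{t−1}, y_t ∈ Ω set z_t = (1−γ)x_{t−1} + γ y_{t−1} and x_t = (1−γ)x_{t−1} + γ y_t with γ ∈ [0,1], β ≥ Lγ. If f is convex, then f(x_t) ≤ (1−γ) f(x_{t−1}) + γ[f(z_t) + ⟨∇f(z_t), y_t − z_t⟩] + (βγ/2)‖y_t − y_{t−1}‖² − (γ(β − Lγ)/2)‖y_t − y_{t−1}‖². -/

import Mathlib

open scoped RealInnerProductSpace

/-- Derivative of `f` along the line `s ↦ a + s • v`. -/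
lemma scgs_line_hasDerivAt {n : ℕ} (f : EuclideanSpace ℝ (Fin n) → ℝ)
    (g a v : EuclideanSpace ℝ (Fin n)) (t : ℝ) (hg : HasGradientAt f g (a + t • v)) :
    HasDerivAt (fun s : ℝ => f (a + s • v)) ⟪g, v⟫ t := by
  have hc : HasDerivAt (fun s : ℝ => a + s • v) v t := by
    simpa using ((hasDerivAt_id t).smul_const v).const_add a
  have := hg.hasFDerivAt.comp_hasDerivAt t hc
  simp [InnerProductSpace.toDual_apply_apply, real_inner_comm] at this; exact this

/-- First-order condition of convexity. -/
lemma scgs_convex_first_order {n : ℕ} (f : EuclideanSpace ℝ (Fin n) → ℝ)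
    (gf : EuclideanSpace ℝ (Fin n) → EuclideanSpace ℝ (Fin n))
    (hconv : ConvexOn ℝ Set.univ f)
    (hgrad : ∀ x, HasGradientAt f (gf x) x)
    (q p : EuclideanSpace ℝ (Fin n)) :
    f q + ⟪gf q, p - q⟫ ≤ f p := by
  set φ : ℝ → ℝ := fun s => f (q + s • (p - q)) with hφ
  have hφconv : ConvexOn ℝ Set.univ φ := by
    have := hconv.comp_affineMap (AffineMap.lineMap q p : ℝ →ᵃ[ℝ] _)
    have heq : ∀ s : ℝ, φ s = (f ∘ (AffineMap.lineMap q p : ℝ →ᵃ[ℝ] _)) s := by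
      intro s; simp [φ, AffineMap.lineMap_apply, add_comm]
    rw [show φ = f ∘ (AffineMap.lineMap q p : ℝ →ᵃ[ℝ] _) from funext heq]
    simpa using this
  have hd : HasDerivAt φ ⟪gf q, p - q⟫ 0 := by
    have := scgs_line_hasDerivAt f (gf q) q (p - q) 0 (by simpa using hgrad q)
    simpa [φ] using this
  have hslope := hφconv.le_slope_of_hasDerivAt (Set.mem_univ 0) (Set.mem_univ 1)
    one_pos hd
  have : slope φ 0 1 = φ 1 - φ 0 := by simp [slope_def_field]
  rw [this] at hslope
  have h0 : φ 0 = f q := by simp [φ]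
  have h1 : φ 1 = f p := by simp [φ]
  linarith

/-- Descent lemma: the quadratic upper bound from `L`-Lipschitz gradient. -/
lemma scgs_descent_lemma {n : ℕ} (L : ℝ) (hL : 0 < L) (f : EuclideanSpace ℝ (Fin n) → ℝ)
    (gf : EuclideanSpace ℝ (Fin n) → EuclideanSpace ℝ (Fin n))
    (hgrad : ∀ x, HasGradientAt f (gf x) x)
    (hLip : LipschitzWith (Real.toNNReal L) gf)
    (a v : EuclideanSpace ℝ (Fin n)) :
    f (a + v) ≤ f a + ⟪gf a, v⟫ + L / 2 * ‖v‖ ^ 2 := by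
  set ψ : ℝ → ℝ := fun t => f (a + t • v) - t * ⟪gf a, v⟫ - L * t ^ 2 / 2 * ‖v‖ ^ 2 with hψ
  have hderiv : ∀ t : ℝ, HasDerivAt ψ
      (⟪gf (a + t • v), v⟫ - ⟪gf a, v⟫ - L * t * ‖v‖ ^ 2) t := by
    intro t
    have h1 := scgs_line_hasDerivAt f (gf (a + t • v)) a v t (hgrad _)
    have h2 : HasDerivAt (fun s : ℝ => s * ⟪gf a, v⟫ + L * s ^ 2 / 2 * ‖v‖ ^ 2)
        (⟪gf a, v⟫ + L * t * ‖v‖ ^ 2) t := by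
      have ha : HasDerivAt (fun s : ℝ => s * ⟪gf a, v⟫) ⟪gf a, v⟫ t := by
        simpa using (hasDerivAt_id t).mul_const ⟪gf a, v⟫
      have hb : HasDerivAt (fun s : ℝ => L * s ^ 2 / 2 * ‖v‖ ^ 2) (L * t * ‖v‖ ^ 2) t := by
        have : HasDerivAt (fun s : ℝ => s ^ 2) (2 * t) t := by
          simpa using hasDerivAt_pow 2 t
        have := ((this.const_mul L).div_const 2).mul_const (‖v‖ ^ 2)
        exact this.congr_deriv (by ring)
      exact ha.add hb
    have := h1.sub h2
    have e : ψ = fun s => f (a + s • v) - (s * ⟪gf a, v⟫ + L * s ^ 2 / 2 * ‖v‖ ^ 2) := by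
      ext s; simp only [ψ]; ring
    rw [e]; exact this.congr_deriv (by ring)
  have hnonpos : ∀ t ∈ Set.Ioo (0:ℝ) 1,
      ⟪gf (a + t • v), v⟫ - ⟪gf a, v⟫ - L * t * ‖v‖ ^ 2 ≤ 0 := by
    intro t ht
    have h1 : ⟪gf (a + t • v) - gf a, v⟫ ≤ ‖gf (a + t • v) - gf a‖ * ‖v‖ :=
      real_inner_le_norm _ _
    have h2 : ‖gf (a + t • v) - gf a‖ ≤ L * (t * ‖v‖) := by
      have := hLip.norm_sub_le (a + t • v) a
      have ht0 : (0:ℝ) ≤ t := le_of_lt ht.1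
      have : ‖gf (a + t • v) - gf a‖ ≤ L * ‖t • v‖ := by
        simpa [Real.coe_toNNReal L hL.le] using hLip.norm_sub_le (a + t • v) a
      simpa [norm_smul, abs_of_nonneg ht0, mul_assoc] using this
    have h3 : ⟪gf (a + t • v), v⟫ - ⟪gf a, v⟫ = ⟪gf (a + t • v) - gf a, v⟫ := by
      rw [inner_sub_left]
    have hv : (0:ℝ) ≤ ‖v‖ := norm_nonneg v
    nlinarith [norm_nonneg (gf (a + t • v) - gf a)]
  have hanti : AntitoneOn ψ (Set.Icc (0:ℝ) 1) := by
    apply antitoneOn_of_deriv_nonpos (convex_Icc 0 1)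
    · exact fun s hs => ((hderiv s).continuousAt).continuousWithinAt
    · intro s hs
      exact (hderiv s).differentiableAt.differentiableWithinAt
    · intro s hs
      rw [interior_Icc] at hs
      rw [(hderiv s).deriv]
      exact hnonpos s hs
  have := hanti (Set.mem_Icc.2 ⟨le_refl 0, zero_le_one⟩)
    (Set.mem_Icc.2 ⟨zero_le_one, le_refl 1⟩) zero_le_one
  simp only [ψ] at this
  simp only [one_smul, zero_smul, add_zero] at this
  linarith [this]

/-- One-step inequality of the SCGS proof: with `z_t = (1−γ)x_{t−1} + γ y_{t−1}` and
`x_t = (1−γ)x_{t−1} + γ y_t`, convexity and `L`-smoothness give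
`f(x_t) ≤ (1−γ)f(x_{t−1}) + γ[f(z_t) + ⟨∇f(z_t), y_t − z_t⟩]
   + (βγ/2)‖y_t − y_{t−1}‖² − (γ(β − Lγ)/2)‖y_t − y_{t−1}‖²`. -/
theorem scgs_one_step_inequality
    {n : ℕ} (Ω : Set (EuclideanSpace ℝ (Fin n))) (hΩ : Convex ℝ Ω)
    (D L γ β : ℝ) (hL : 0 < L)
    (hdiam : ∀ a ∈ Ω, ∀ b ∈ Ω, ‖a - b‖ ≤ D)
    (hγ : γ ∈ Set.Icc (0 : ℝ) 1) (hβ : L * γ ≤ β)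
    (f : EuclideanSpace ℝ (Fin n) → ℝ)
    (gf : EuclideanSpace ℝ (Fin n) → EuclideanSpace ℝ (Fin n))
    (hconv : ConvexOn ℝ Set.univ f)
    (hgrad : ∀ x, HasGradientAt f (gf x) x)
    (hLip : LipschitzWith (Real.toNNReal L) gf)
    (x y' y : EuclideanSpace ℝ (Fin n)) (hx : x ∈ Ω) (hy' : y' ∈ Ω) (hy : y ∈ Ω) :
    f ((1 - γ) • x + γ • y)
      ≤ (1 - γ) * f x
        + γ * (f ((1 - γ) • x + γ • y')
            + ⟪gf ((1 - γ) • x + γ • y'), y - ((1 - γ) • x + γ • y')⟫)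
        + (β * γ / 2) * ‖y - y'‖ ^ 2 - (γ * (β - L * γ) / 2) * ‖y - y'‖ ^ 2 := by
  obtain ⟨hγ0, hγ1⟩ := hγ
  set z := (1 - γ) • x + γ • y' with hz
  have hxt : (1 - γ) • x + γ • y = z + γ • (y - y') := by rw [hz]; module
  have hd := scgs_descent_lemma L hL f gf hgrad hLip z (γ • (y - y'))
  rw [hxt]
  have hnorm : ‖γ • (y - y')‖ ^ 2 = γ ^ 2 * ‖y - y'‖ ^ 2 := by
    rw [norm_smul]; rw [Real.norm_eq_abs, abs_of_nonneg hγ0]; ring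
  have hsplit : ⟪gf z, γ • (y - y')⟫ = (1 - γ) * ⟪gf z, x - z⟫ + γ * ⟪gf z, y - z⟫ := by
    rw [show γ • (y - y') = (1 - γ) • (x - z) + γ • (y - z) by rw [hz]; module]
    rw [inner_add_right, real_inner_smul_right, real_inner_smul_right]
  have hfo' := scgs_convex_first_order f gf hconv hgrad z x
  have h1γ : (0:ℝ) ≤ 1 - γ := by linarith
  have hmul := mul_le_mul_of_nonneg_left hfo' h1γ
  rw [hnorm, hsplit] at hd
  nlinarith [sq_nonneg (‖y - y'‖)]
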